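/- Let G = C_n ⊕ C_n with n ≥ 2. The following are equivalent: (b) every zero-sum free sequence S over G of length 2n−2 satisfies a^{n−2} | S for some a ∈ G; (c) every minimal zero-sum sequence S over G of length 2n−1 satisfies a^{n−1} | S for some a ∈ G. -/

import Mathlib

/-- A minimal zero-sum sequence: nonempty, sum zero, and no proper nonempty
subsequence has sum zero. -/
def IsMinZeroSum {G : Type*} [AddCommGroup G] (S : Multiset G) : Prop :=
  S ≠ 0 ∧ S.sum = 0 ∧ ∀ T ≤ S, T ≠ 0 → T ≠ S → T.sum ≠ 0

theorem stmt_14 (n : ℕ) (hn : 2 ≤ n) :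
    (∀ S : Multiset (ZMod n × ZMod n),
        (∀ T ≤ S, T ≠ 0 → T.sum ≠ 0) → Multiset.card S = 2 * n - 2 →
        ∃ a : ZMod n × ZMod n, Multiset.replicate (n - 2) a ≤ S) ↔
    (∀ S : Multiset (ZMod n × ZMod n),
        IsMinZeroSum S → Multiset.card S = 2 * n - 1 →
        ∃ a : ZMod n × ZMod n, Multiset.replicate (n - 1) a ≤ S) := by
  haveI : NeZero n := ⟨by omega⟩
  constructor
  · -- B → C
    intro hB S hS hcard
    by_cases h2 : n = 2
    · -- trivial case n = 2 : just need some element of S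
      obtain ⟨u, hu⟩ := Multiset.exists_mem_of_ne_zero hS.1
      refine ⟨u, ?_⟩
      rw [show n - 1 = 1 from by omega, Multiset.replicate_one, Multiset.singleton_le]
      exact hu
    have hn3 : 3 ≤ n := by omega
    haveI : Fact (1 < n) := ⟨by omega⟩
    obtain ⟨hS0, hSsum, hSmin⟩ := hS
    by_contra hcon
    push_neg at hcon
    have hcount : ∀ x, S.count x ≤ n - 2 := by
      intro x
      by_contra h
      push_neg at h
      exact hcon x (Multiset.le_count_iff_replicate_le.1 (by omega))
    -- erasures are zero-sum free of length 2n-2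
    have hzsf : ∀ g ∈ S, ∀ T ≤ S.erase g, T ≠ 0 → T.sum ≠ 0 := by
      intro g hg T hT hT0
      have hTS : T ≤ S := hT.trans (Multiset.erase_le g S)
      have hTne : T ≠ S := by
        intro h
        have h1 : Multiset.card T ≤ Multiset.card (S.erase g) := Multiset.card_le_card hT
        rw [Multiset.card_erase_of_mem hg, h, Nat.pred_eq_sub_one] at h1
        omega
      exact hSmin T hTS hT0 hTne
    have hcarderase : ∀ g ∈ S, Multiset.card (S.erase g) = 2 * n - 2 := by
      intro g hg
      rw [Multiset.card_erase_of_mem hg, hcard, Nat.pred_eq_sub_one]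
      omega
    -- step 1: find a with multiplicity exactly n-2
    obtain ⟨u, hu⟩ := Multiset.exists_mem_of_ne_zero hS0
    obtain ⟨a, ha⟩ := hB (S.erase u) (hzsf u hu) (hcarderase u hu)
    have hca' : n - 2 ≤ (S.erase u).count a := Multiset.le_count_iff_replicate_le.2 ha
    have hcaS : S.count a = n - 2 := by
      have h1 : (S.erase u).count a ≤ S.count a :=
        Multiset.count_le_of_le a (Multiset.erase_le u S)
      have h2 := hcount a
      omega
    have haS : a ∈ S := by
      rw [← Multiset.count_pos, hcaS]; omega
    -- step 2: find b ≠ a with multiplicity exactly n-2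
    obtain ⟨b, hb⟩ := hB (S.erase a) (hzsf a haS) (hcarderase a haS)
    have hcb' : n - 2 ≤ (S.erase a).count b := Multiset.le_count_iff_replicate_le.2 hb
    have hba : b ≠ a := by
      intro h
      rw [h, Multiset.count_erase_self, hcaS] at hcb'
      omega
    have hab : a ≠ b := fun h => hba h.symm
    have hcbS : S.count b = n - 2 := by
      rw [Multiset.count_erase_of_ne hba] at hcb'
      have := hcount b
      omega
    -- decompose S = a^(n-2) b^(n-2) + R
    have hrep : Multiset.replicate (n - 2) a + Multiset.replicate (n - 2) b ≤ S := by
      rw [Multiset.le_iff_count]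
      intro x
      rw [Multiset.count_add, Multiset.count_replicate, Multiset.count_replicate]
      by_cases hxa : x = a
      · subst hxa
        simp [hba, hcaS]
      · by_cases hxb : x = b
        · subst hxb
          simp [hab, hcbS]
        · simp [show ¬ a = x from fun h => hxa h.symm, show ¬ b = x from fun h => hxb h.symm]
    set R := S - (Multiset.replicate (n - 2) a + Multiset.replicate (n - 2) b) with hRdef
    have hSdecomp : Multiset.replicate (n - 2) a + Multiset.replicate (n - 2) b + R = S := by
      rw [hRdef, add_comm]
      exact tsub_add_cancel_of_le hrep
    have hcardR : Multiset.card R = 3 := by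
      have := congrArg Multiset.card hSdecomp
      simp only [Multiset.card_add, Multiset.card_replicate, hcard] at this
      omega
    have hRa : R.count a = 0 := by
      rw [hRdef, Multiset.count_sub, Multiset.count_add, Multiset.count_replicate,
        Multiset.count_replicate, hcaS]
      simp [hba]
    have hRb : R.count b = 0 := by
      rw [hRdef, Multiset.count_sub, Multiset.count_add, Multiset.count_replicate,
        Multiset.count_replicate, hcbS]
      simp [hab]
    have haR : a ∉ R := Multiset.count_eq_zero.1 hRa
    have hbR : b ∉ R := Multiset.count_eq_zero.1 hRb
    obtain ⟨c1, c2, c3, hc⟩ := Multiset.card_eq_three.1 hcardR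
    -- the key subsum lemma
    have key : ∀ (i j : ℕ) (T : Multiset (ZMod n × ZMod n)), i ≤ n - 2 → j ≤ n - 2 →
        T ≤ R → Multiset.card T ≤ 1 → 0 < i + j + Multiset.card T →
        i • a + j • b + T.sum ≠ 0 := by
      intro i j T hi hj hTR hT1 hpos hzero
      have hle : Multiset.replicate i a + Multiset.replicate j b + T ≤ S := by
        rw [← hSdecomp]
        exact add_le_add (add_le_add ((Multiset.replicate_le_replicate a).2 hi)
          ((Multiset.replicate_le_replicate b).2 hj)) hTR
      refine hSmin _ hle ?_ ?_ ?_
      · intro h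
        have := congrArg Multiset.card h
        simp only [Multiset.card_add, Multiset.card_replicate, Multiset.card_zero] at this
        omega
      · intro h
        have := congrArg Multiset.card h
        simp only [Multiset.card_add, Multiset.card_replicate, hcard] at this
        omega
      · rw [Multiset.sum_add, Multiset.sum_add, Multiset.sum_replicate,
          Multiset.sum_replicate]
        exact hzero
    -- conversion between nat-smul and zmod-smul
    have hcast : ∀ k : ZMod n, ((k.val : ℕ) : ZMod n) = k := fun k =>
      ZMod.natCast_rightInverse k
    have hsmul : ∀ (k : ZMod n) (g : ZMod n × ZMod n), k.val • g = k • g := by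
      intro k g
      conv_rhs => rw [← hcast k]
      rw [Nat.cast_smul_eq_nsmul]
    have hvalle : ∀ x : ZMod n, x ≠ 1 → (-x).val ≤ n - 2 := by
      intro x hx
      have h1 : (-x).val < n := ZMod.val_lt _
      by_contra h
      push_neg at h
      apply hx
      have h2 : -x = ((n - 1 : ℕ) : ZMod n) := by
        rw [← hcast (-x)]
        congr 1
        omega
      rw [Nat.cast_sub (by omega : 1 ≤ n)] at h2
      simp only [ZMod.natCast_self, Nat.cast_one, zero_sub] at h2
      exact neg_injective h2
    -- independence of a and b
    have indep : ∀ i j : ZMod n, i • a + j • b = 0 → i = 0 ∧ j = 0 := by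
      intro i j hij
      by_cases hi1 : i.val ≤ n - 2
      · by_cases hj1 : j.val ≤ n - 2
        · constructor
          · by_contra h0
            refine key i.val j.val 0 hi1 hj1 (Multiset.zero_le _) (by simp) ?_ ?_
            · have : i.val ≠ 0 := fun h => h0 ((ZMod.val_eq_zero i).1 h)
              simp only [Multiset.card_zero, add_zero]
              omega
            · rw [hsmul, hsmul]
              simpa using hij
          · by_contra h0
            refine key i.val j.val 0 hi1 hj1 (Multiset.zero_le _) (by simp) ?_ ?_
            · have : j.val ≠ 0 := fun h => h0 ((ZMod.val_eq_zero j).1 h)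
              simp only [Multiset.card_zero, add_zero]
              omega
            · rw [hsmul, hsmul]
              simpa using hij
        · -- j.val = n - 1, so j = -1 and b = i • a
          exfalso
          have hjv : j.val = n - 1 := by
            have := ZMod.val_lt j
            omega
          have hjm : j = -1 := by
            rw [← hcast j, hjv, Nat.cast_sub (by omega : 1 ≤ n)]
            simp [ZMod.natCast_self]
          have hab2 : b = i • a := by
            rw [hjm, neg_one_smul] at hij
            have h3 : i • a - b = 0 := by rw [sub_eq_add_neg]; exact hij
            exact (sub_eq_zero.mp h3).symm
          have hine : i ≠ 1 := by
            intro h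
            rw [h, one_smul] at hab2
            exact hba hab2
          refine key (-i).val 1 0 (hvalle i hine) (by omega) (Multiset.zero_le _) (by simp)
            (by simp) ?_
          rw [hsmul]
          simp only [one_nsmul, Multiset.sum_zero, add_zero]
          rw [hab2, ← add_smul]
          simp
      · -- i.val = n - 1, so i = -1 and a = j • b
        exfalso
        have hiv : i.val = n - 1 := by
          have := ZMod.val_lt i
          omega
        have him : i = -1 := by
          rw [← hcast i, hiv, Nat.cast_sub (by omega : 1 ≤ n)]
          simp [ZMod.natCast_self]
        have hab2 : a = j • b := by
          rw [him, neg_one_smul] at hij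
          have h3 : j • b - a = 0 := by rw [sub_eq_add_neg, add_comm]; exact hij
          exact (sub_eq_zero.mp h3).symm
        have hjne : j ≠ 1 := by
          intro h
          rw [h, one_smul] at hab2
          exact hba hab2.symm
        refine key 1 (-j).val 0 (by omega) (hvalle j hjne) (Multiset.zero_le _) (by simp)
          (by simp) ?_
        rw [hsmul]
        simp only [one_nsmul, Multiset.sum_zero, add_zero]
        rw [hab2, ← add_smul]
        simp
    -- the map (i,j) ↦ i•a + j•b is bijective
    set f : (ZMod n × ZMod n) → (ZMod n × ZMod n) := fun p => p.1 • a + p.2 • b with hf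
    have hfadd : ∀ p q, f (p + q) = f p + f q := by
      intro p q
      simp only [hf, Prod.fst_add, Prod.snd_add, add_smul]
      abel
    have hinj : Function.Injective f := by
      intro p q hpq
      have h0 : (p.1 - q.1) • a + (p.2 - q.2) • b = 0 := by
        simp only [hf] at hpq
        simp only [sub_smul]
        linear_combination (norm := module) hpq
      obtain ⟨e1, e2⟩ := indep _ _ h0
      have e1' : p.1 = q.1 := by linear_combination e1
      have e2' : p.2 = q.2 := by linear_combination e2
      exact Prod.ext e1' e2'
    have hsurj : Function.Surjective f := Finite.injective_iff_surjective.mp hinj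
    obtain ⟨p1, hp1⟩ := hsurj c1
    obtain ⟨p2, hp2⟩ := hsurj c2
    obtain ⟨p3, hp3⟩ := hsurj c3
    have hc1R : c1 ∈ R := by rw [hc]; simp
    have hc2R : c2 ∈ R := by rw [hc]; simp
    have hc3R : c3 ∈ R := by rw [hc]; simp
    -- each element of R has some coordinate equal to 1
    have hck : ∀ (p c : ZMod n × ZMod n), f p = c → c ∈ R → p.1 = 1 ∨ p.2 = 1 := by
      intro p c hfc hcR
      by_contra h
      push_neg at h
      obtain ⟨hx, hy⟩ := h
      refine key (-p.1).val (-p.2).val {c} (hvalle _ hx) (hvalle _ hy)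
        (Multiset.singleton_le.2 hcR) (by simp) (by simp) ?_
      rw [hsmul, hsmul, Multiset.sum_singleton, ← hfc]
      simp only [hf]
      module
    -- the sum constraint
    have hRsum : R.sum = c1 + c2 + c3 := by
      rw [hc]
      simp [add_assoc]
    have hnsmul : ∀ g : ZMod n × ZMod n, (n - 2) • g = -((2 : ZMod n) • g) := by
      intro g
      rw [← Nat.cast_smul_eq_nsmul (ZMod n), Nat.cast_sub (by omega : 2 ≤ n)]
      simp only [ZMod.natCast_self, Nat.cast_ofNat, zero_sub, neg_smul]
    have htot : c1 + c2 + c3 = (2 : ZMod n) • a + (2 : ZMod n) • b := by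
      have h1 := hSsum
      rw [← hSdecomp, Multiset.sum_add, Multiset.sum_add, Multiset.sum_replicate,
        Multiset.sum_replicate, hRsum, hnsmul a, hnsmul b] at h1
      linear_combination (norm := module) h1
    have hpsum : p1 + p2 + p3 = ((2 : ZMod n), (2 : ZMod n)) := by
      apply hinj
      rw [hfadd, hfadd, hp1, hp2, hp3]
      simp only [hf]
      exact htot
    have hxsum : p1.1 + p2.1 + p3.1 = 2 := by
      have := congrArg Prod.fst hpsum
      simpa using this
    have hysum : p1.2 + p2.2 + p3.2 = 2 := by
      have := congrArg Prod.snd hpsum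
      simpa using this
    -- endgame helpers
    have hend_b : ∀ (p c : ZMod n × ZMod n), f p = c → c ∈ R → p.1 = 0 → p.2 = 1 → False := by
      intro p c hfc hcR h1 h2
      apply hbR
      have hcb : c = b := by
        rw [← hfc]
        simp only [hf, h1, h2, zero_smul, one_smul, zero_add]
      rwa [← hcb]
    have hend_a : ∀ (p c : ZMod n × ZMod n), f p = c → c ∈ R → p.1 = 1 → p.2 = 0 → False := by
      intro p c hfc hcR h1 h2
      apply haR
      have hca : c = a := by
        rw [← hfc]
        simp only [hf, h1, h2, zero_smul, one_smul, add_zero]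
      rwa [← hca]
    have hd1 := hck p1 c1 hp1 hc1R
    have hd2 := hck p2 c2 hp2 hc2R
    have hd3 := hck p3 c3 hp3 hc3R
    rcases hd1 with h1 | h1 <;> rcases hd2 with h2 | h2 <;> rcases hd3 with h3 | h3
    · exact one_ne_zero (α := ZMod n) (by linear_combination hxsum - h1 - h2 - h3)
    · exact hend_b p3 c3 hp3 hc3R (by linear_combination hxsum - h1 - h2) h3
    · exact hend_b p2 c2 hp2 hc2R (by linear_combination hxsum - h1 - h3) h2
    · exact hend_a p1 c1 hp1 hc1R h1 (by linear_combination hysum - h2 - h3)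
    · exact hend_b p1 c1 hp1 hc1R (by linear_combination hxsum - h2 - h3) h1
    · exact hend_a p2 c2 hp2 hc2R h2 (by linear_combination hysum - h1 - h3)
    · exact hend_a p3 c3 hp3 hc3R h3 (by linear_combination hysum - h1 - h2)
    · exact one_ne_zero (α := ZMod n) (by linear_combination hysum - h1 - h2 - h3)
  · -- C → B
    intro hC S hS hcard
    set g := -S.sum with hg
    have hS' : IsMinZeroSum (g ::ₘ S) := by
      refine ⟨by simp, by simp [hg], ?_⟩
      intro T hT hT0 hTne hsum
      by_cases hcnt : T.count g ≤ S.count g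
      · have hTS : T ≤ S := by
          rw [Multiset.le_iff_count]
          intro x
          by_cases hx : x = g
          · subst hx; exact hcnt
          · have h1 := Multiset.le_iff_count.1 hT x
            rwa [Multiset.count_cons_of_ne hx] at h1
        exact hS T hTS hT0 hsum
      · push_neg at hcnt
        set D := (g ::ₘ S) - T with hD
        have hTD : T + D = g ::ₘ S := by
          rw [hD, add_comm]
          exact tsub_add_cancel_of_le hT
        have hD0 : D ≠ 0 := by
          intro h
          apply hTne
          rw [h, add_zero] at hTD
          exact hTD
        have hDsum : D.sum = 0 := by
          have h1 := congrArg Multiset.sum hTD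
          rw [Multiset.sum_add, hsum, zero_add, Multiset.sum_cons, hg] at h1
          rw [h1]
          abel
        have hDS : D ≤ S := by
          rw [Multiset.le_iff_count]
          intro x
          rw [hD, Multiset.count_sub]
          by_cases hx : x = g
          · rw [hx, Multiset.count_cons_self]
            have h1 := Multiset.le_iff_count.1 hT g
            rw [Multiset.count_cons_self] at h1
            omega
          · rw [Multiset.count_cons_of_ne hx]
            omega
        exact hS D hDS hD0 hDsum
    obtain ⟨a, ha⟩ := hC (g ::ₘ S) hS' (by rw [Multiset.card_cons, hcard]; omega)
    refine ⟨a, ?_⟩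
    rw [← Multiset.le_count_iff_replicate_le] at ha ⊢
    have h1 : (g ::ₘ S).count a ≤ S.count a + 1 := by
      by_cases h : a = g
      · rw [h, Multiset.count_cons_self]
      · rw [Multiset.count_cons_of_ne h]
        omega
    omega
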